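/- If G is a circuit of the 3-dimensional rigidity matroid with exactly 10 vertices and 25 edges, then G is 3-rigid: there exists a configuration p : V(G) → ℂ^3 for which the rigidity matrix R_G(p) has rank 3·10 − 6 = 24. -/

import Mathlib

open scoped BigOperators

noncomputable section

/-- Complex squared length (no conjugation). -/
def csq (d : ℕ) (x y : Fin d → ℂ) : ℂ := ∑ k, (x k - y k) ^ 2

lemma csq_comm (d : ℕ) (x y : Fin d → ℂ) : csq d x y = csq d y x := by
  unfold csq; congr 1; funext k; ring

/-- Squared length of an (unordered) edge under a configuration. -/
def edgeSq {V : Type*} (d : ℕ) (p : V → Fin d → ℂ) : Sym2 V → ℂ :=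
  Sym2.lift ⟨fun u v => csq d (p u) (p v), fun u v => csq_comm d (p u) (p v)⟩

/-- The measurement map of a graph: a configuration goes to its vector of
squared edge lengths. -/
def measMap {V : Type*} (G : SimpleGraph V) (d : ℕ) (p : V → Fin d → ℂ) :
    G.edgeSet → ℂ := fun e => edgeSq d p (e : Sym2 V)

/-- The `d`-dimensional measurement variety of a graph: the Zariski closure
(zero locus of the vanishing ideal) of the image of the measurement map. -/
def measVariety {V : Type*} (G : SimpleGraph V) (d : ℕ) : Set (G.edgeSet → ℂ) :=
  MvPolynomial.zeroLocus ℂ (MvPolynomial.vanishingIdeal ℂ (Set.range (measMap G d)))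

/-- Row of the rigidity matrix for the ordered pair (u,v). -/
def rRowFun {V : Type*} [DecidableEq V] (p : V → Fin 3 → ℂ) (u v : V) :
    V → Fin 3 → ℂ :=
  fun w k => if w = u then 2 * (p u k - p v k)
    else if w = v then 2 * (p v k - p u k) else 0

lemma rRowFun_comm {V : Type*} [DecidableEq V] (p : V → Fin 3 → ℂ) (u v : V) :
    rRowFun p u v = rRowFun p v u := by
  funext w k
  unfold rRowFun
  rcases eq_or_ne w u with h1 | h1 <;> rcases eq_or_ne w v with h2 | h2
  · have huv : u = v := h1.symm.trans h2
    subst huv; simp [h1]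
  · have huv : u ≠ v := fun h => h2 (h1.trans h)
    simp [h1, h2, huv, huv.symm]
  · have huv : v ≠ u := fun h => h1 (h2.trans h)
    simp [h1, h2, huv, huv.symm]
  · simp [h1, h2]

/-- Row of the rigidity matrix corresponding to an unordered edge. -/
def rigidityRow {V : Type*} [DecidableEq V] (p : V → Fin 3 → ℂ) :
    Sym2 V → (V → Fin 3 → ℂ) :=
  Sym2.lift ⟨rRowFun p, rRowFun_comm p⟩

/-- A fintype instance for edge sets over finite vertex types. -/
noncomputable instance edgeSetFintype {V : Type*} [Finite V] (G : SimpleGraph V) :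
    Fintype G.edgeSet := Fintype.ofFinite _

noncomputable instance neighborSetFintype' {V : Type*} [Finite V] (G : SimpleGraph V) (v : V) :
    Fintype (G.neighborSet v) := Fintype.ofFinite _

/-- The space of equilibrium stresses of the framework `(G, p)`:
the left kernel of the rigidity matrix. -/
def stressSpace {V : Type*} [DecidableEq V] [Finite V] (G : SimpleGraph V)
    (p : V → Fin 3 → ℂ) : Submodule ℂ (G.edgeSet → ℂ) where
  carrier := {ω | ∑ e : G.edgeSet, ω e • rigidityRow p (e : Sym2 V) = 0}
  add_mem' := by
    intro a b ha hb
    simp only [Set.mem_setOf_eq] at *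
    simp only [Pi.add_apply, add_smul, Finset.sum_add_distrib, ha, hb, add_zero]
  zero_mem' := by simp
  smul_mem' := by
    intro c a ha
    simp only [Set.mem_setOf_eq] at *
    simp only [Pi.smul_apply, smul_eq_mul, mul_smul, ← Finset.smul_sum, ha, smul_zero]

/-- The span of the rows of the rigidity matrix of `(G,p)`. -/
def rowSpan {V : Type*} [DecidableEq V] (G : SimpleGraph V) (p : V → Fin 3 → ℂ) :
    Submodule ℂ (V → Fin 3 → ℂ) :=
  Submodule.span ℂ (Set.range fun e : G.edgeSet => rigidityRow p (e : Sym2 V))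

/-- The rank of the rigidity matrix of `(G,p)`. -/
def rigidityRank {V : Type*} [DecidableEq V] (G : SimpleGraph V) (p : V → Fin 3 → ℂ) : ℕ :=
  Module.finrank ℂ (rowSpan G p)

/-- `G` is a circuit of the 3-dimensional rigidity matroid: its full edge set is
dependent (for every configuration), but every proper subset of its edge set is
independent (for some configuration). -/
def IsRigidityCircuit {V : Type*} [DecidableEq V] (G : SimpleGraph V) : Prop :=
  (∀ p : V → Fin 3 → ℂ, ¬ LinearIndependent ℂ (fun e : G.edgeSet => rigidityRow p (e : Sym2 V))) ∧
  (∀ S : Set (Sym2 V), S ⊆ G.edgeSet → S ≠ G.edgeSet →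
    ∃ p : V → Fin 3 → ℂ, LinearIndependent ℂ (fun e : S => rigidityRow p (e : Sym2 V)))

/-- `G` is generically rigid in 3 dimensions. -/
def IsThreeRigid {V : Type*} [DecidableEq V] [Fintype V] (G : SimpleGraph V) : Prop :=
  ∃ p : V → Fin 3 → ℂ, rigidityRank G p = 3 * Fintype.card V - 6

/-- The complete bipartite graph `K_{5,5}`. -/
def K55 : SimpleGraph (Fin 5 ⊕ Fin 5) := completeBipartiteGraph (Fin 5) (Fin 5)

/-- A vector is balanced if its coordinates sum to zero. -/
def IsBalanced {E : Type*} [Fintype E] (ω : E → ℂ) : Prop := ∑ e, ω e = 0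

/-- The Zariski tangent space to a subset `W ⊆ ℂ^E` at a point `x`:
vectors annihilated by the differentials at `x` of all polynomials in the
vanishing ideal of `W`. -/
def zTangent {E : Type*} [Fintype E] (W : Set (E → ℂ)) (x : E → ℂ) :
    Submodule ℂ (E → ℂ) where
  carrier := {v | ∀ f ∈ MvPolynomial.vanishingIdeal ℂ W,
    ∑ e, v e * MvPolynomial.eval x (MvPolynomial.pderiv e f) = 0}
  add_mem' := by
    intro a b ha hb
    simp only [Set.mem_setOf_eq] at *
    intro f hf
    simp only [Pi.add_apply, add_mul, Finset.sum_add_distrib, ha f hf, hb f hf, add_zero]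
  zero_mem' := by simp
  smul_mem' := by
    intro c a ha
    simp only [Set.mem_setOf_eq] at *
    intro f hf
    simp only [Pi.smul_apply, smul_eq_mul, mul_assoc, ← Finset.mul_sum, ha f hf, mul_zero]

/-- Krull dimension of (the Zariski closure of) a subset of `ℂ^E`, as the Krull
dimension of its coordinate ring. -/
def varietyDim {E : Type*} (W : Set (E → ℂ)) : WithBot (WithTop ℕ) :=
  ringKrullDim (MvPolynomial E ℂ ⧸ MvPolynomial.vanishingIdeal ℂ W)

/-- `x` is a smooth point of `W` if it lies on `W` and its Zariski tangent space
has dimension equal to the Krull dimension of `W`. -/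
def IsSmoothPoint {E : Type*} [Fintype E] (W : Set (E → ℂ)) (x : E → ℂ) : Prop :=
  x ∈ W ∧ (Module.finrank ℂ (zTangent W x) : WithBot (WithTop ℕ)) = varietyDim W

/-- `ω` is a normal vector to `W` at `x`. -/
def IsNormalAt {E : Type*} [Fintype E] (W : Set (E → ℂ)) (x : E → ℂ) (ω : E → ℂ) : Prop :=
  ∀ v ∈ zTangent W x, ∑ e, ω e * v e = 0

/-- The set `S(G)` of smooth points of a measurement variety. -/
def smoothLocus {E : Type*} [Fintype E] (W : Set (E → ℂ)) : Set (E → ℂ) :=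
  {x | IsSmoothPoint W x}

/-- The set `B(G)` of smooth points all of whose normal vectors are balanced. -/
def balancedLocus {E : Type*} [Fintype E] (W : Set (E → ℂ)) : Set (E → ℂ) :=
  {x | IsSmoothPoint W x ∧ ∀ ω : E → ℂ, IsNormalAt W x ω → IsBalanced ω}


/-- A circuit of the 3-dimensional rigidity matroid with 10 vertices and 25
edges is 3-rigid: some configuration gives the rigidity matrix rank 24. -/
theorem circuit_10_25_is_threeRigid {V : Type} [DecidableEq V] [Fintype V]
    (G : SimpleGraph V) (hC : IsRigidityCircuit G)
    (h10 : Fintype.card V = 10) (h25 : G.edgeFinset.card = 25) :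
    ∃ p : V → Fin 3 → ℂ, rigidityRank G p = 24 := by
  classical
  obtain ⟨hdep, hind⟩ := hC
  have hpos : 0 < G.edgeFinset.card := by rw [h25]; norm_num
  obtain ⟨e₀, he₀⟩ := Finset.card_pos.mp hpos
  set S : Set (Sym2 V) := ↑(G.edgeFinset.erase e₀) with hS
  have hSsub : S ⊆ G.edgeSet := by
    intro x hx
    rw [hS, Finset.mem_coe, Finset.mem_erase] at hx
    exact SimpleGraph.mem_edgeFinset.mp hx.2
  have hSne : S ≠ G.edgeSet := by
    intro h
    have he' : e₀ ∈ G.edgeSet := SimpleGraph.mem_edgeFinset.mp he₀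
    rw [← h, hS, Finset.mem_coe, Finset.mem_erase] at he'
    exact he'.1 rfl
  obtain ⟨p, hp⟩ := hind S hSsub hSne
  refine ⟨p, le_antisymm ?_ ?_⟩
  · -- upper bound: rows are dependent
    have hnd := hdep p
    have hcardE : Fintype.card G.edgeSet = 25 := by
      have := G.edgeFinset_card
      rw [h25] at this
      exact this.symm.trans (by congr!)
    by_contra hgt
    push_neg at hgt
    refine hnd (linearIndependent_iff_card_le_finrank_span.mpr ?_)
    show Fintype.card G.edgeSet ≤ Module.finrank ℂ (Submodule.span ℂ (Set.range _))
    have : (25 : ℕ) ≤ rigidityRank G p := by omega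
    rw [hcardE]
    exact this
  · -- lower bound: 24 independent rows from S
    have hcardS : Fintype.card S = 24 := by
      have h1 : Fintype.card S = Fintype.card ↥(G.edgeFinset.erase e₀) :=
        Fintype.card_congr (Equiv.refl _)
      rw [h1, Fintype.card_coe, Finset.card_erase_of_mem he₀, h25]
    have h1 : Module.finrank ℂ
        (Submodule.span ℂ (Set.range fun e : S => rigidityRow p (e : Sym2 V))) = 24 := by
      rw [finrank_span_eq_card hp, hcardS]
    have h2 : Submodule.span ℂ (Set.range fun e : S => rigidityRow p (e : Sym2 V))
        ≤ rowSpan G p := by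
      apply Submodule.span_mono
      rintro _ ⟨e, rfl⟩
      exact ⟨⟨(e : Sym2 V), hSsub e.2⟩, rfl⟩
    calc (24 : ℕ) = _ := h1.symm
      _ ≤ _ := Submodule.finrank_mono h2


end
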